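/- Let f(x) = g(‖Px‖₂²) with P an orthogonal projection onto an (N−d)-dimensional subspace of ℝ^N, g ∈ C¹ with g′(t) ≠ 0 for t in the relevant range, and let T^{N−1} be the hyperplane orthogonal to ∇f(x₀) for some x₀ with Px₀ ≠ 0. Then the restriction of f to T^{N−1} is again a linear-sleeve function: there exists an orthogonal projection P′ : T^{N−1} → T^{N−1} onto an (N−1−d)-dimensional subspace of T^{N−1} such that f(y) = g(‖P′ y‖₂²) for all y ∈ T^{N−1}. Concretely, with u_N = ∇f(x₀)/‖∇f(x₀)‖₂ ∈ range(P), P′ = P − u_N u_Nᵀ restricted to T^{N−1}. -/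

import Mathlib

open scoped RealInnerProductSpace

/-- the restriction of a linear-sleeve function
`f(x) = g(‖Px‖₂²)` to the hyperplane orthogonal to `∇f(x₀)` is again a
linear-sleeve function: with `u_N = Px₀/‖Px₀‖ ∈ K = range P` and
`K' = K ∩ (ℝ u_N)^⊥` (of dimension `N − d − 1`), one has
`f(y) = g(‖P' y‖₂²)` for all `y ⊥ u_N`, where `P'` projects onto `K'`. -/
theorem stmt17 (N d : ℕ) (K : Submodule ℝ (EuclideanSpace ℝ (Fin N)))
    (hK : Module.finrank ℝ K = N - d) (hdN : d < N)
    (g g' : ℝ → ℝ) (hderiv : ∀ t, HasDerivAt g (g' t) t)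
    (x₀ : EuclideanSpace ℝ (Fin N))
    (hx₀ : (Submodule.orthogonalProjection K x₀ : EuclideanSpace ℝ (Fin N)) ≠ 0)
    (hg' : g' (‖(Submodule.orthogonalProjection K x₀ : EuclideanSpace ℝ (Fin N))‖ ^ 2) ≠ 0) :
    Module.finrank ℝ
        (K ⊓ (Submodule.span ℝ
          {(Submodule.orthogonalProjection K x₀ : EuclideanSpace ℝ (Fin N))})ᗮ :
          Submodule ℝ (EuclideanSpace ℝ (Fin N))) = N - d - 1 ∧
      ∀ y : EuclideanSpace ℝ (Fin N),
        ⟪y, (Submodule.orthogonalProjection K x₀ : EuclideanSpace ℝ (Fin N))⟫ = 0 →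
        g (‖(Submodule.orthogonalProjection K y : EuclideanSpace ℝ (Fin N))‖ ^ 2)
          = g (‖(Submodule.orthogonalProjection
                (K ⊓ (Submodule.span ℝ
                  {(Submodule.orthogonalProjection K x₀ : EuclideanSpace ℝ (Fin N))})ᗮ) y :
              EuclideanSpace ℝ (Fin N))‖ ^ 2) := by
  set u : EuclideanSpace ℝ (Fin N) := (Submodule.orthogonalProjection K x₀ : EuclideanSpace ℝ (Fin N))
  have hu : u ∈ K := (Submodule.orthogonalProjection K x₀).2
  have hspan : Submodule.span ℝ {u} ≤ K := by
    rw [Submodule.span_singleton_le_iff_mem]; exact hu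
  constructor
  · rw [inf_comm]
    refine Submodule.finrank_add_inf_finrank_orthogonal' hspan ?_
    rw [finrank_span_singleton hx₀, hK]
    omega
  · intro y hy
    have hKy : (Submodule.orthogonalProjection K y : EuclideanSpace ℝ (Fin N)) ∈
        K ⊓ (Submodule.span ℝ {u})ᗮ := by
      refine ⟨(Submodule.orthogonalProjection K y).2, ?_⟩
      show (Submodule.orthogonalProjection K y : EuclideanSpace ℝ (Fin N)) ∈ (Submodule.span ℝ {u})ᗮ
      rw [Submodule.mem_orthogonal_singleton_iff_inner_right]
      have h1 : ⟪(Submodule.orthogonalProjection K u : EuclideanSpace ℝ (Fin N)), y⟫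
          = ⟪u, (Submodule.orthogonalProjection K y : EuclideanSpace ℝ (Fin N))⟫ :=
        Submodule.inner_starProjection_left_eq_right K u y
      rw [show (Submodule.orthogonalProjection K u : EuclideanSpace ℝ (Fin N)) = u from Submodule.starProjection_eq_self_iff.mpr hu] at h1
      rw [← h1, real_inner_comm]
      exact hy
    have heq : (Submodule.orthogonalProjection (K ⊓ (Submodule.span ℝ {u})ᗮ) y :
        EuclideanSpace ℝ (Fin N)) = (Submodule.orthogonalProjection K y : EuclideanSpace ℝ (Fin N)) := by
      refine Submodule.eq_starProjection_of_mem_of_inner_eq_zero hKy ?_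
      intro w hw
      have hwK : w ∈ K := hw.1
      have := Submodule.sub_starProjection_mem_orthogonal (K := K) y
      rw [real_inner_comm]; exact this w hwK
    rw [heq]
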